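/- Let μ be a U*-invariant Borel probability measure of a contractive Markov system. Then the set function defined on cylinders by M̄(_m[e_m,...,e_n]) = ∫ p_{e_m}(x) p_{e_{m+1}}(w_{e_m}x) ⋯ p_{e_n}(w_{e_{n-1}}∘⋯∘w_{e_m}x) dμ(x) extends uniquely to a shift-invariant Borel probability measure on Σ = E^ℤ; in particular M̄(_m[e_m,...,e_n]) = Σ_{e_{m-1}∈E} M̄(_{m-1}[e_{m-1}, e_m,...,e_n]) for all cylinders. -/

import Mathlib

open MeasureTheory ENNReal Filter

/-- A contractive Markov system on a metric space `K` with vertex type `V` and edge type `E`. -/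
structure CMS (E V K : Type*) [Fintype E] [MetricSpace K] [MeasurableSpace K] where
  i : E → V
  t : E → V
  Ks : V → Set K
  w : E → K → K
  p : E → K → ℝ
  a : ℝ
  ha0 : 0 < a
  ha1 : a < 1
  Ks_nonempty : ∀ v, (Ks v).Nonempty
  Ks_meas : ∀ v, MeasurableSet (Ks v)
  Ks_disj : ∀ v v', v ≠ v' → Disjoint (Ks v) (Ks v')
  Ks_cover : ∀ x : K, ∃ v, x ∈ Ks v
  w_meas : ∀ e, Measurable (w e)
  p_meas : ∀ e, Measurable (p e)
  p_nonneg : ∀ e x, 0 ≤ p e x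
  p_sum : ∀ x : K, ∑ e, p e x = 1
  p_zero : ∀ e, ∀ x ∉ Ks (i e), p e x = 0
  w_maps : ∀ e, Set.MapsTo (w e) (Ks (i e)) (Ks (t e))
  contractive : ∀ v, ∀ x ∈ Ks v, ∀ y ∈ Ks v,
      ∑ e, p e x * dist (w e x) (w e y) ≤ a * dist x y

variable {E V K : Type*} [Fintype E] [MetricSpace K] [MeasurableSpace K]

/-- `S.orbit e m x j = w_{e_{m+j}} ∘ ⋯ ∘ w_{e_m} (x)`. -/
def CMS.orbit (S : CMS E V K) (e : ℤ → E) (m : ℤ) (x : K) : ℕ → K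
  | 0 => S.w (e m) x
  | j + 1 => S.w (e (m + j + 1)) (S.orbit e m x j)

/-- `S.pathProb e m x j = p_{e_m}(x) p_{e_{m+1}}(w_{e_m}x) ⋯ p_{e_{m+j}}(w_{e_{m+j-1}}∘⋯∘w_{e_m}x)`. -/
def CMS.pathProb (S : CMS E V K) (e : ℤ → E) (m : ℤ) (x : K) : ℕ → ℝ
  | 0 => S.p (e m) x
  | j + 1 => S.pathProb e m x j * S.p (e (m + j + 1)) (S.orbit e m x j)

/-- The σ-algebra `𝒜_m` on `Σ = E^ℤ` generated by the coordinates with index `≥ m`. -/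
def Am (E : Type*) (m : ℤ) : MeasurableSpace (ℤ → E) :=
  ⨆ (i : ℤ) (_ : m ≤ i), MeasurableSpace.comap (fun σ => σ i) ⊤

/-- The cylinder `_m[e_m, …, e_{m+j}]`. -/
def cyl (m : ℤ) (j : ℕ) (e : ℤ → E) : Set (ℤ → E) :=
  {σ | ∀ k : ℤ, m ≤ k → k ≤ m + j → σ k = e k}

/-- `P` is the family of Markov measures `P^m_x` on `(Σ, 𝒜_m)` of the CMS `S`. -/
def IsKernel (S : CMS E V K) (P : ∀ m : ℤ, K → @Measure (ℤ → E) (Am E m)) : Prop :=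
  (∀ (m : ℤ) (x : K), @IsProbabilityMeasure _ (Am E m) (P m x)) ∧
  ∀ (m : ℤ) (x : K) (e : ℤ → E) (j : ℕ),
    P m x (cyl m j e) = ENNReal.ofReal (S.pathProb e m x j)

/-- The `m`-th lift `Φ_m(ν)(A) = ∫ P^m_x(A) dν(x)`. -/
noncomputable def liftMeas (P : ∀ m : ℤ, K → @Measure (ℤ → E) (Am E m))
    (m : ℤ) (ν : Measure K) (A : Set (ℤ → E)) : ℝ≥0∞ :=
  ∫⁻ x, P m x A ∂ν

/-- The lift outer measure `Φ(ν)`, via coverings `B ⊆ ⋃_{m ≤ 0} A_m`, `A_m ∈ 𝒜_m` (indexed by `m = -n`). -/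
noncomputable def PhiM (P : ∀ m : ℤ, K → @Measure (ℤ → E) (Am E m))
    (ν : Measure K) (B : Set (ℤ → E)) : ℝ≥0∞ :=
  ⨅ (A : ℕ → Set (ℤ → E)) (_ : ∀ n : ℕ, MeasurableSet[Am E (-(n : ℤ))] (A n))
    (_ : B ⊆ ⋃ n, A n), ∑' n : ℕ, liftMeas P (-(n : ℤ)) ν (A n)

/-- `Y^{x_1…x_N}_{m0}(σ) = w_{σ_0}∘⋯∘w_{σ_m}(x_{i(σ_m)})`. -/
noncomputable def CMS.Y (S : CMS E V K) (xs : V → K) (m : ℤ) (σ : ℤ → E) : K :=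
  S.orbit σ m (xs (S.i (σ m))) (-m).toNat

/-- The uniform measure `(1/N) ∑_i δ_{x_i}`. -/
noncomputable def unif [Fintype V] (xs : V → K) : Measure K :=
  ((Fintype.card V : ℝ≥0∞))⁻¹ • ∑ v : V, Measure.dirac (xs v)

/-- The measure `P^m_{x_1…x_N} = Φ_m((1/N)∑δ_{x_i}) = (1/N)∑_i P^m_{x_i}`. -/
noncomputable def PmMix [Fintype V] (P : ∀ m : ℤ, K → @Measure (ℤ → E) (Am E m))
    (xs : V → K) (m : ℤ) : @Measure (ℤ → E) (Am E m) :=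
  ((Fintype.card V : ℝ≥0∞))⁻¹ • ∑ v : V, P m (xs v)

/-- The product (Borel) σ-algebra on `Σ = E^ℤ`, generated by the cylinders. -/
def sigAll (E : Type*) : MeasurableSpace (ℤ → E) :=
  @MeasurableSpace.pi ℤ (fun _ => E) (fun _ => ⊤)

/-- The left shift on `Σ = E^ℤ`. -/
def shiftMap {E : Type*} (σ : ℤ → E) : ℤ → E := fun n => σ (n + 1)

section Aux
variable {E V K : Type*} [Fintype E] [MetricSpace K] [MeasurableSpace K]

lemma CMS.orbit_congr (S : CMS E V K) {e e' : ℤ → E} (m : ℤ) (x : K) :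
    ∀ j : ℕ, (∀ k : ℤ, m ≤ k → k ≤ m + j → e k = e' k) → S.orbit e m x j = S.orbit e' m x j
  | 0, h => by simp [CMS.orbit, h m le_rfl (by simp)]
  | j + 1, h => by
    have h' : ∀ k : ℤ, m ≤ k → k ≤ m + j → e k = e' k := fun k h1 h2 => h k h1 (by push_cast; omega)
    simp only [CMS.orbit]
    rw [S.orbit_congr m x j h', h (m + j + 1) (by omega) (by push_cast; omega)]

lemma CMS.pathProb_congr (S : CMS E V K) {e e' : ℤ → E} (m : ℤ) (x : K) :
    ∀ j : ℕ, (∀ k : ℤ, m ≤ k → k ≤ m + j → e k = e' k) → S.pathProb e m x j = S.pathProb e' m x j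
  | 0, h => by simp [CMS.pathProb, h m le_rfl (by simp)]
  | j + 1, h => by
    have h' : ∀ k : ℤ, m ≤ k → k ≤ m + j → e k = e' k := fun k h1 h2 => h k h1 (by push_cast; omega)
    simp only [CMS.pathProb]
    rw [S.pathProb_congr m x j h', S.orbit_congr m x j h', h (m + j + 1) (by omega) (by push_cast; omega)]

lemma CMS.pathProb_nonneg (S : CMS E V K) (e : ℤ → E) (m : ℤ) (x : K) :
    ∀ j : ℕ, 0 ≤ S.pathProb e m x j
  | 0 => S.p_nonneg _ _
  | j + 1 => mul_nonneg (S.pathProb_nonneg e m x j) (S.p_nonneg _ _)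

lemma CMS.p_le_one (S : CMS E V K) (e : E) (x : K) : S.p e x ≤ 1 := by
  have h := S.p_sum x
  have : ∀ f ∈ Finset.univ, 0 ≤ S.p f x := fun f _ => S.p_nonneg f x
  calc S.p e x ≤ ∑ f, S.p f x := Finset.single_le_sum this (Finset.mem_univ e)
  _ = 1 := h

lemma CMS.pathProb_le_one (S : CMS E V K) (e : ℤ → E) (m : ℤ) (x : K) :
    ∀ j : ℕ, S.pathProb e m x j ≤ 1
  | 0 => S.p_le_one _ _
  | j + 1 => by
    have h1 := S.pathProb_le_one e m x j
    have h2 := S.p_le_one (e (m + j + 1)) (S.orbit e m x j)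
    have h3 := S.pathProb_nonneg e m x j
    have h4 := S.p_nonneg (e (m + j + 1)) (S.orbit e m x j)
    calc S.pathProb e m x (j+1) = S.pathProb e m x j * S.p (e (m + j + 1)) (S.orbit e m x j) := rfl
    _ ≤ 1 * 1 := mul_le_mul h1 h2 h4 (by norm_num)
    _ = 1 := by norm_num

lemma CMS.orbit_meas (S : CMS E V K) (e : ℤ → E) (m : ℤ) :
    ∀ j : ℕ, Measurable (fun x => S.orbit e m x j)
  | 0 => S.w_meas _
  | j + 1 => (S.w_meas _).comp (S.orbit_meas e m j)

lemma CMS.pathProb_meas (S : CMS E V K) (e : ℤ → E) (m : ℤ) :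
    ∀ j : ℕ, Measurable (fun x => S.pathProb e m x j)
  | 0 => S.p_meas _
  | j + 1 => (S.pathProb_meas e m j).mul ((S.p_meas _).comp (S.orbit_meas e m j))

lemma CMS.orbit_cons (S : CMS E V K) (e : ℤ → E) (m : ℤ) (x : K) :
    ∀ j : ℕ, S.orbit e (m - 1) x (j + 1) = S.orbit e m (S.w (e (m - 1)) x) j
  | 0 => by simp only [CMS.orbit]; norm_num
  | j + 1 => by
    show S.w (e (m - 1 + (j+1) + 1)) (S.orbit e (m-1) x (j+1)) = S.w (e (m + j + 1)) (S.orbit e m (S.w (e (m-1)) x) j)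
    rw [S.orbit_cons e m x j]
    congr 2
    push_cast; ring

lemma CMS.pathProb_cons (S : CMS E V K) (e : ℤ → E) (m : ℤ) (x : K) :
    ∀ j : ℕ, S.pathProb e (m - 1) x (j + 1) = S.p (e (m - 1)) x * S.pathProb e m (S.w (e (m - 1)) x) j
  | 0 => by
    show S.pathProb e (m-1) x 0 * S.p (e (m - 1 + 0 + 1)) (S.orbit e (m-1) x 0) = _
    simp only [CMS.pathProb, CMS.orbit]
    norm_num
  | j + 1 => by
    show S.pathProb e (m-1) x (j+1) * S.p (e (m - 1 + (j+1) + 1)) (S.orbit e (m-1) x (j+1)) = _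
    rw [S.pathProb_cons e m x j, S.orbit_cons e m x j]
    have : m - 1 + ((j:ℤ)+1) + 1 = m + (j:ℤ) + 1 := by ring
    rw [this, mul_assoc]
    rfl

end Aux
section Aux2
variable {E V K : Type*} [Fintype E] [MetricSpace K] [MeasurableSpace K]

noncomputable def Ifun (S : CMS E V K) (μ : Measure K) (m : ℤ) (j : ℕ) (e : ℤ → E) : ℝ≥0∞ :=
  ∫⁻ x, ENNReal.ofReal (S.pathProb e m x j) ∂μ

lemma Ifun_congr (S : CMS E V K) (μ : Measure K) {e e' : ℤ → E} (m : ℤ) (j : ℕ)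
    (h : ∀ k : ℤ, m ≤ k → k ≤ m + j → e k = e' k) : Ifun S μ m j e = Ifun S μ m j e' := by
  unfold Ifun; congr 1; ext x; rw [S.pathProb_congr m x j h]

lemma Ifun_le_one (S : CMS E V K) (μ : Measure K) [IsProbabilityMeasure μ] (m : ℤ) (j : ℕ)
    (e : ℤ → E) : Ifun S μ m j e ≤ 1 := by
  calc Ifun S μ m j e ≤ ∫⁻ _, 1 ∂μ := by
        apply lintegral_mono fun x => ?_
        simpa using ENNReal.ofReal_le_one.2 (S.pathProb_le_one e m x j)
  _ = 1 := by simp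

lemma sum_pathProb_right (S : CMS E V K) (e : ℤ → E) (m : ℤ) (j : ℕ) (x : K) :
    ∑ f : E, S.pathProb (Function.update e (m + j + 1) f) m x (j + 1) = S.pathProb e m x j := by
  have key : ∀ f : E, S.pathProb (Function.update e (m + j + 1) f) m x (j + 1)
      = S.pathProb e m x j * S.p f (S.orbit e m x j) := by
    intro f
    show S.pathProb (Function.update e (m + j + 1) f) m x j
        * S.p ((Function.update e (m + j + 1) f) (m + j + 1)) (S.orbit (Function.update e (m + j + 1) f) m x j) = _
    rw [Function.update_self,
      S.pathProb_congr m x j (e' := e) (fun k h1 h2 => Function.update_of_ne (by omega) _ _),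
      S.orbit_congr m x j (e' := e) (fun k h1 h2 => Function.update_of_ne (by omega) _ _)]
  simp only [key, ← Finset.sum_mul]
  rw [← Finset.mul_sum, S.p_sum, mul_one]

lemma Ifun_right (S : CMS E V K) (μ : Measure K) (m : ℤ) (j : ℕ) (e : ℤ → E) :
    Ifun S μ m j e = ∑ f : E, Ifun S μ m (j + 1) (Function.update e (m + j + 1) f) := by
  unfold Ifun
  rw [← lintegral_finset_sum _ (fun f _ => (S.pathProb_meas _ m (j+1)).ennreal_ofReal)]
  congr 1; ext x
  rw [← ENNReal.ofReal_sum_of_nonneg (fun f _ => S.pathProb_nonneg _ m x (j+1)),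
    sum_pathProb_right]

lemma Ifun_left (S : CMS E V K) (μ : Measure K)
    (hinv : ∀ g : K → ℝ≥0∞, Measurable g →
      ∫⁻ x, g x ∂μ = ∑ e : E, ∫⁻ x, ENNReal.ofReal (S.p e x) * g (S.w e x) ∂μ)
    (m : ℤ) (j : ℕ) (e : ℤ → E) :
    Ifun S μ m j e = ∑ f : E, Ifun S μ (m - 1) (j + 1) (Function.update e (m - 1) f) := by
  unfold Ifun
  rw [hinv (fun x => ENNReal.ofReal (S.pathProb e m x j))
    ((S.pathProb_meas e m j).ennreal_ofReal)]
  apply Finset.sum_congr rfl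
  intro f _
  congr 1; ext x
  rw [← ENNReal.ofReal_mul (S.p_nonneg f x)]
  congr 1
  rw [S.pathProb_cons _ m x j, Function.update_self,
    S.pathProb_congr m (S.w f x) j (e' := e) (fun k h1 h2 => Function.update_of_ne (show k ≠ m - 1 by omega) f e)]

lemma CMS.orbit_shift (S : CMS E V K) (e : ℤ → E) (m : ℤ) (x : K) :
    ∀ j : ℕ, S.orbit (fun k => e (k - 1)) (m + 1) x j = S.orbit e m x j
  | 0 => by simp [CMS.orbit]
  | j + 1 => by
    show S.w (e (m + 1 + j + 1 - 1)) (S.orbit _ (m+1) x j) = S.w (e (m + j + 1)) (S.orbit e m x j)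
    rw [S.orbit_shift e m x j]
    congr 2
    ring

lemma CMS.pathProb_shift (S : CMS E V K) (e : ℤ → E) (m : ℤ) (x : K) :
    ∀ j : ℕ, S.pathProb (fun k => e (k - 1)) (m + 1) x j = S.pathProb e m x j
  | 0 => by simp [CMS.pathProb]
  | j + 1 => by
    show S.pathProb _ (m+1) x j * S.p (e (m + 1 + j + 1 - 1)) (S.orbit _ (m+1) x j) = _
    rw [S.pathProb_shift e m x j, S.orbit_shift e m x j]
    show _ = S.pathProb e m x j * S.p (e (m + j + 1)) (S.orbit e m x j)
    congr 3
    ring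

lemma Ifun_shift (S : CMS E V K) (μ : Measure K) (m : ℤ) (j : ℕ) (e : ℤ → E) :
    Ifun S μ (m + 1) j (fun k => e (k - 1)) = Ifun S μ m j e := by
  unfold Ifun; congr 1; ext x; rw [S.pathProb_shift e m x j]

end Aux2
section Aux3
variable {E V K : Type*} [Fintype E] [MetricSpace K] [MeasurableSpace K]

/-- embed a finite code on `[-N, N]` into `ℤ → E` -/
def embN {E : Type*} (N : ℕ) (g : Fin (2*N+1) → E) : ℤ → E := fun k =>
  if h : -(N:ℤ) ≤ k ∧ k ≤ N then g ⟨(k + N).toNat, by omega⟩ else g ⟨0, by omega⟩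

/-- restrict `σ : ℤ → E` to a finite code on `[-N, N]` -/
def resN {E : Type*} (N : ℕ) (σ : ℤ → E) : Fin (2*N+1) → E := fun i => σ (-(N:ℤ) + i)

lemma embN_eq {E : Type*} (N : ℕ) (g : Fin (2*N+1) → E) (k : ℤ) (h1 : -(N:ℤ) ≤ k) (h2 : k ≤ N) :
    embN N g k = g ⟨(k + N).toNat, by omega⟩ := dif_pos ⟨h1, h2⟩

lemma resN_embN {E : Type*} (N : ℕ) (g : Fin (2*N+1) → E) : resN N (embN N g) = g := by
  funext i
  have hi := i.isLt
  rw [resN, embN_eq N g _ (by omega) (by omega)]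
  congr 1
  apply Fin.ext
  simp only [Fin.val_mk]
  omega

lemma embN_resN {E : Type*} (N : ℕ) (σ : ℤ → E) (k : ℤ) (h1 : -(N:ℤ) ≤ k) (h2 : k ≤ N) :
    embN N (resN N σ) k = σ k := by
  rw [embN_eq N _ k h1 h2, resN]
  exact congrArg σ (by simp only [Fin.val_mk]; omega)

/-- `s` is determined by the coordinates in `[-N, N]`. -/
def DetN {E : Type*} (N : ℕ) (s : Set (ℤ → E)) : Prop :=
  ∀ σ τ : ℤ → E, (∀ k : ℤ, -(N:ℤ) ≤ k → k ≤ N → σ k = τ k) → σ ∈ s → τ ∈ s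

lemma DetN.mono {E : Type*} {N N' : ℕ} {s : Set (ℤ → E)} (h : DetN N s) (hN : N ≤ N') :
    DetN N' s := fun σ τ hag => h σ τ (fun k hk1 hk2 => hag k (by omega) (by omega))

lemma DetN.inter {E : Type*} {N : ℕ} {s t : Set (ℤ → E)} (hs : DetN N s) (ht : DetN N t) :
    DetN N (s ∩ t) := fun σ τ hag hm => ⟨hs σ τ hag hm.1, ht σ τ hag hm.2⟩

lemma DetN.diff {E : Type*} {N : ℕ} {s t : Set (ℤ → E)} (hs : DetN N s) (ht : DetN N t) :
    DetN N (s \ t) := fun σ τ hag hm =>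
  ⟨hs σ τ hag hm.1, fun hc => hm.2 (ht τ σ (fun k h1 h2 => (hag k h1 h2).symm) hc)⟩

lemma DetN.mem_iff {E : Type*} {N : ℕ} {s : Set (ℤ → E)} (h : DetN N s) {σ τ : ℤ → E}
    (hag : ∀ k : ℤ, -(N:ℤ) ≤ k → k ≤ N → σ k = τ k) : σ ∈ s ↔ τ ∈ s :=
  ⟨h σ τ hag, h τ σ (fun k h1 h2 => (hag k h1 h2).symm)⟩

noncomputable def wN (S : CMS E V K) (μ : Measure K) (N : ℕ) (g : Fin (2*N+1) → E) : ℝ≥0∞ :=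
  Ifun S μ (-(N:ℤ)) (2*N) (embN N g)

noncomputable def thN (S : CMS E V K) (μ : Measure K) (N : ℕ)
    (T : Set (Fin (2*N+1) → E)) : ℝ≥0∞ :=
  ∑ g : Fin (2*N+1) → E, T.indicator (wN S μ N) g

noncomputable def valN (S : CMS E V K) (μ : Measure K) (N : ℕ) (s : Set (ℤ → E)) : ℝ≥0∞ :=
  thN S μ N (resN N '' s)

noncomputable def cylFun (S : CMS E V K) (μ : Measure K) (s : Set (ℤ → E)) : ℝ≥0∞ :=
  ⨅ (N : ℕ) (_ : DetN N s), valN S μ N s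

lemma thN_mono (S : CMS E V K) (μ : Measure K) (N : ℕ) {T T' : Set (Fin (2*N+1) → E)}
    (h : T ⊆ T') : thN S μ N T ≤ thN S μ N T' :=
  Finset.sum_le_sum fun g _ => Set.indicator_le_indicator_of_subset h (fun _ => by simp) g

lemma thN_union_le (S : CMS E V K) (μ : Measure K) (N : ℕ) (T T' : Set (Fin (2*N+1) → E)) :
    thN S μ N (T ∪ T') ≤ thN S μ N T + thN S μ N T' := by
  rw [thN, thN, thN, ← Finset.sum_add_distrib]
  apply Finset.sum_le_sum
  intro g _
  classical
  by_cases h : g ∈ T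
  · rw [Set.indicator_of_mem (Set.mem_union_left _ h)]
    exact le_add_right (le_of_eq (Set.indicator_of_mem h _).symm)
  · by_cases h' : g ∈ T'
    · rw [Set.indicator_of_mem (Set.mem_union_right _ h')]
      exact le_add_left (le_of_eq (Set.indicator_of_mem h' _).symm)
    · rw [Set.indicator_of_notMem (fun hc => hc.elim h h'), Set.indicator_of_notMem h,
        Set.indicator_of_notMem h']
      simp

lemma thN_empty (S : CMS E V K) (μ : Measure K) (N : ℕ) : thN S μ N ∅ = 0 := by
  simp [thN]

lemma thN_biUnion_le (S : CMS E V K) (μ : Measure K) (N : ℕ) {ι : Type*}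
    (t : Finset ι) (T : ι → Set (Fin (2*N+1) → E)) :
    thN S μ N (⋃ n ∈ t, T n) ≤ ∑ n ∈ t, thN S μ N (T n) := by
  classical
  induction t using Finset.induction_on with
  | empty => simp [thN_empty]
  | insert _ _ hni ih =>
    rename_i a u
    rw [Finset.set_biUnion_insert, Finset.sum_insert hni]
    exact le_trans (thN_union_le S μ N _ _) (add_le_add_right ih _)

lemma thN_union_disjoint (S : CMS E V K) (μ : Measure K) (N : ℕ)
    {T T' : Set (Fin (2*N+1) → E)} (h : Disjoint T T') :
    thN S μ N (T ∪ T') = thN S μ N T + thN S μ N T' := by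
  rw [thN, thN, thN, ← Finset.sum_add_distrib]
  apply Finset.sum_congr rfl
  intro g _
  rw [Set.indicator_union_of_disjoint h]

end Aux3
section Aux4
variable {E V K : Type*} [Fintype E] [MetricSpace K] [MeasurableSpace K]

def piN {E : Type*} (N : ℕ) (g' : Fin (2*(N+1)+1) → E) : Fin (2*N+1) → E :=
  fun i => g' ⟨i + 1, by have := i.isLt; omega⟩

def extN {E : Type*} (N : ℕ) (a : E) (g : Fin (2*N+1) → E) (b : E) : Fin (2*(N+1)+1) → E :=
  fun i => if _h1 : (i : ℕ) = 0 then a else if _h2 : (i : ℕ) = 2*N+2 then b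
    else g ⟨i - 1, by have := i.isLt; omega⟩

lemma extN_zero {E : Type*} (N : ℕ) (a : E) (g : Fin (2*N+1) → E) (b : E) (h : 0 < 2*(N+1)+1) :
    extN N a g b ⟨0, h⟩ = a := by simp [extN]

lemma extN_last {E : Type*} (N : ℕ) (a : E) (g : Fin (2*N+1) → E) (b : E) (h : 2*N+2 < 2*(N+1)+1) :
    extN N a g b ⟨2*N+2, h⟩ = b := by simp [extN]

lemma extN_mid {E : Type*} (N : ℕ) (a : E) (g : Fin (2*N+1) → E) (b : E) {i : ℕ}
    (h : i < 2*(N+1)+1) (h1 : i ≠ 0) (h2 : i ≠ 2*N+2) :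
    extN N a g b ⟨i, h⟩ = g ⟨i - 1, by omega⟩ := by
  simp only [extN, Fin.val_mk]
  rw [dif_neg h1, dif_neg h2]

lemma piN_extN {E : Type*} (N : ℕ) (a : E) (g : Fin (2*N+1) → E) (b : E) :
    piN N (extN N a g b) = g := by
  funext i
  have hi := i.isLt
  rw [piN, extN_mid N a g b (by omega) (by omega) (by omega)]
  exact congrArg g (Fin.ext (by simp only [Fin.val_mk]; omega))

lemma extN_recover {E : Type*} (N : ℕ) (g : Fin (2*N+1) → E) (g' : Fin (2*(N+1)+1) → E)
    (h : piN N g' = g) :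
    extN N (g' ⟨0, by omega⟩) g (g' ⟨2*N+2, by omega⟩) = g' := by
  funext i
  have hi := i.isLt
  by_cases h0 : (i : ℕ) = 0
  · have : i = ⟨0, by omega⟩ := Fin.ext h0
    rw [this, extN_zero]
  · by_cases hl : (i : ℕ) = 2*N+2
    · have : i = ⟨2*N+2, by omega⟩ := Fin.ext hl
      rw [this, extN_last]
    · have hi' : i = ⟨(i : ℕ), hi⟩ := Fin.ext rfl
      rw [hi', extN_mid N _ g _ hi h0 hl, ← h, piN]
      congr 1
      apply Fin.ext
      simp only [Fin.val_mk]
      omega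

lemma piN_resN {E : Type*} (N : ℕ) (σ : ℤ → E) : piN N (resN (N+1) σ) = resN N σ := by
  funext i
  rw [piN, resN, resN]
  exact congrArg σ (by simp only [Fin.val_mk]; push_cast; ring)

lemma embN_extN_left (N : ℕ) {E : Type*} (a : E) (g : Fin (2*N+1) → E) (b : E) :
    embN (N+1) (extN N a g b) (-(N:ℤ)-1) = a := by
  rw [embN_eq (N+1) _ _ (by push_cast; omega) (by push_cast; omega)]
  have h0 : ((-(N:ℤ)-1 + ((N:ℕ)+1:ℕ)).toNat) = 0 := by push_cast; omega
  have : (⟨(-(N:ℤ)-1 + ((N+1:ℕ):ℤ)).toNat, by omega⟩ : Fin (2*(N+1)+1)) = ⟨0, by omega⟩ := by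
    apply Fin.ext; simp only [Fin.val_mk]; push_cast; omega
  rw [this, extN_zero]

lemma embN_extN_right (N : ℕ) {E : Type*} (a : E) (g : Fin (2*N+1) → E) (b : E) :
    embN (N+1) (extN N a g b) ((N:ℤ)+1) = b := by
  rw [embN_eq (N+1) _ _ (by push_cast; omega) (by push_cast; omega)]
  have : (⟨(((N:ℤ)+1) + ((N+1:ℕ):ℤ)).toNat, by omega⟩ : Fin (2*(N+1)+1)) = ⟨2*N+2, by omega⟩ := by
    apply Fin.ext; simp only [Fin.val_mk]; push_cast; omega
  rw [this, extN_last]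

lemma embN_extN_mid (N : ℕ) {E : Type*} (a : E) (g : Fin (2*N+1) → E) (b : E) (k : ℤ)
    (h1 : -(N:ℤ) ≤ k) (h2 : k ≤ N) :
    embN (N+1) (extN N a g b) k = embN N g k := by
  rw [embN_eq (N+1) _ _ (by push_cast; omega) (by push_cast; omega),
    embN_eq N _ _ h1 h2]
  have hlt : (k + ((N+1:ℕ):ℤ)).toNat < 2*(N+1)+1 := by push_cast; omega
  have hv : (⟨(k + ((N+1:ℕ):ℤ)).toNat, hlt⟩ : Fin (2*(N+1)+1)) = ⟨(k + ((N+1:ℕ):ℤ)).toNat, hlt⟩ := rfl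
  rw [extN_mid N a g b hlt (by push_cast; omega) (by push_cast; omega)]
  congr 1
  apply Fin.ext
  simp only [Fin.val_mk]
  push_cast
  omega

end Aux4
section Aux5
variable {E V K : Type*} [Fintype E] [MetricSpace K] [MeasurableSpace K]

lemma wN_step (S : CMS E V K) (μ : Measure K)
    (hinv : ∀ g : K → ℝ≥0∞, Measurable g →
      ∫⁻ x, g x ∂μ = ∑ e : E, ∫⁻ x, ENNReal.ofReal (S.p e x) * g (S.w e x) ∂μ)
    (N : ℕ) (g : Fin (2*N+1) → E) :
    wN S μ N g = ∑ a : E, ∑ b : E, wN S μ (N+1) (extN N a g b) := by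
  rw [wN, Ifun_left S μ hinv]
  apply Finset.sum_congr rfl
  intro a _
  rw [Ifun_right S μ]
  apply Finset.sum_congr rfl
  intro b _
  rw [wN]
  have hm : -(((N+1:ℕ)):ℤ) = -(N:ℤ) - 1 := by push_cast; ring
  have hj : 2*(N+1) = 2*N+1+1 := by ring
  rw [hm, hj]
  apply Ifun_congr
  intro k hk1 hk2
  push_cast at hk2
  by_cases hL : k = -(N:ℤ) - 1
  · subst hL
    rw [Function.update_of_ne (by push_cast; omega), Function.update_self, embN_extN_left]
  · by_cases hR : k = (N:ℤ) + 1
    · have hco : -(N:ℤ) - 1 + ((2*N+1:ℕ):ℤ) + 1 = (N:ℤ) + 1 := by push_cast; ring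
      subst hR
      rw [← hco, Function.update_self, hco, embN_extN_right]
    · rw [Function.update_of_ne (by push_cast; omega), Function.update_of_ne hL,
        embN_extN_mid N a g b k (by omega) (by omega)]

lemma valN_succ (S : CMS E V K) (μ : Measure K)
    (hinv : ∀ g : K → ℝ≥0∞, Measurable g →
      ∫⁻ x, g x ∂μ = ∑ e : E, ∫⁻ x, ENNReal.ofReal (S.p e x) * g (S.w e x) ∂μ)
    {N : ℕ} {s : Set (ℤ → E)} (hs : DetN N s) :
    valN S μ (N+1) s = valN S μ N s := by
  classical
  rw [valN, valN, thN, thN,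
    ← Finset.sum_fiberwise_of_maps_to (s := (Finset.univ : Finset (Fin (2*(N+1)+1) → E)))
      (t := (Finset.univ : Finset (Fin (2*N+1) → E))) (g := piN N) (fun x _ => Finset.mem_univ _)
      ((resN (N+1) '' s).indicator (wN S μ (N+1)))]
  apply Finset.sum_congr rfl
  intro g _
  have hfib : Finset.univ.filter (fun g' => piN N g' = g)
      = Finset.image (fun ab : E × E => extN N ab.1 g ab.2) Finset.univ := by
    apply Finset.ext
    intro g'
    simp only [Finset.mem_filter, Finset.mem_univ, true_and, Finset.mem_image]
    constructor
    · intro h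
      exact ⟨(g' ⟨0, by omega⟩, g' ⟨2*N+2, by omega⟩), extN_recover N g g' h⟩
    · rintro ⟨ab, rfl⟩
      exact piN_extN N ab.1 g ab.2
  have hinj : ∀ ab ∈ (Finset.univ : Finset (E × E)), ∀ ab' ∈ Finset.univ,
      extN N ab.1 g ab.2 = extN N ab'.1 g ab'.2 → ab = ab' := by
    intro ab _ ab' _ hee
    have h0 := congrFun hee ⟨0, by omega⟩
    have hl := congrFun hee ⟨2*N+2, by omega⟩
    rw [extN_zero, extN_zero] at h0
    rw [extN_last, extN_last] at hl
    exact Prod.ext h0 hl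
  by_cases hg : g ∈ resN N '' s
  · rw [Set.indicator_of_mem hg]
    have hmem : ∀ g' : Fin (2*(N+1)+1) → E, piN N g' = g → g' ∈ resN (N+1) '' s := by
      intro g' hpi
      obtain ⟨σ, hσs, hσr⟩ := hg
      refine ⟨Function.update (Function.update σ (-(N:ℤ)-1) (g' ⟨0, by omega⟩))
        ((N:ℤ)+1) (g' ⟨2*N+2, by omega⟩), ?_, ?_⟩
      · apply hs σ _
        intro k h1 h2
        rw [Function.update_of_ne (by omega), Function.update_of_ne (by omega)]
        exact hσs
      · funext i
        have hi := i.isLt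
        by_cases h0 : (i : ℕ) = 0
        · have hco : -(((N+1:ℕ)):ℤ) + (i : ℤ) = -(N:ℤ) - 1 := by push_cast; omega
          rw [resN, hco, Function.update_of_ne (by omega), Function.update_self]
          exact congrArg g' (Fin.ext h0.symm)
        · by_cases hl : (i : ℕ) = 2*N+2
          · have hco : -(((N+1:ℕ)):ℤ) + (i : ℤ) = (N:ℤ) + 1 := by push_cast; omega
            rw [resN, hco, Function.update_self]
            exact congrArg g' (Fin.ext hl.symm)
          · have hco : -(((N+1:ℕ)):ℤ) + (i : ℤ) = -(N:ℤ) + ((i:ℕ) - 1 : ℕ) := by push_cast; omega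
            rw [resN, hco, Function.update_of_ne (by push_cast; omega),
              Function.update_of_ne (by push_cast; omega)]
            have : σ (-(N:ℤ) + ((i:ℕ) - 1 : ℕ)) = resN N σ ⟨(i:ℕ) - 1, by omega⟩ := rfl
            rw [this, hσr, ← hpi, piN]
            exact congrArg g' (Fin.ext (by simp only [Fin.val_mk]; omega))
    calc ∑ g' ∈ Finset.univ.filter (fun g' => piN N g' = g),
          (resN (N+1) '' s).indicator (wN S μ (N+1)) g'
        = ∑ g' ∈ Finset.univ.filter (fun g' => piN N g' = g), wN S μ (N+1) g' := by
          apply Finset.sum_congr rfl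
          intro g' hg'
          simp only [Finset.mem_filter] at hg'
          exact Set.indicator_of_mem (hmem g' hg'.2) _
      _ = ∑ ab : E × E, wN S μ (N+1) (extN N ab.1 g ab.2) := by
          rw [hfib, Finset.sum_image hinj]
      _ = wN S μ N g := by rw [Fintype.sum_prod_type, ← wN_step S μ hinv N g]
  · rw [Set.indicator_of_notMem hg]
    apply Finset.sum_eq_zero
    intro g' hg'
    simp only [Finset.mem_filter, Finset.mem_univ, true_and] at hg'
    apply Set.indicator_of_notMem
    intro hc
    obtain ⟨σ, hσs, hσr⟩ := hc
    exact hg ⟨σ, hσs, by rw [← hg', ← hσr, piN_resN]⟩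

lemma valN_stable (S : CMS E V K) (μ : Measure K)
    (hinv : ∀ g : K → ℝ≥0∞, Measurable g →
      ∫⁻ x, g x ∂μ = ∑ e : E, ∫⁻ x, ENNReal.ofReal (S.p e x) * g (S.w e x) ∂μ)
    {N : ℕ} {s : Set (ℤ → E)} (hs : DetN N s) :
    ∀ d : ℕ, valN S μ (N + d) s = valN S μ N s
  | 0 => rfl
  | d + 1 => by
    rw [← Nat.add_assoc, valN_succ S μ hinv (hs.mono (by omega)), valN_stable S μ hinv hs d]

lemma valN_eq (S : CMS E V K) (μ : Measure K)
    (hinv : ∀ g : K → ℝ≥0∞, Measurable g →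
      ∫⁻ x, g x ∂μ = ∑ e : E, ∫⁻ x, ENNReal.ofReal (S.p e x) * g (S.w e x) ∂μ)
    {N N' : ℕ} {s : Set (ℤ → E)} (hs : DetN N s) (hs' : DetN N' s) :
    valN S μ N s = valN S μ N' s := by
  rcases le_total N N' with h | h
  · rw [← valN_stable S μ hinv hs (N' - N)]
    congr 1
    omega
  · rw [← valN_stable S μ hinv hs' (N - N')]
    congr 1
    omega

lemma cylFun_eq_valN (S : CMS E V K) (μ : Measure K)
    (hinv : ∀ g : K → ℝ≥0∞, Measurable g →
      ∫⁻ x, g x ∂μ = ∑ e : E, ∫⁻ x, ENNReal.ofReal (S.p e x) * g (S.w e x) ∂μ)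
    {N : ℕ} {s : Set (ℤ → E)} (hs : DetN N s) :
    cylFun S μ s = valN S μ N s := by
  apply le_antisymm
  · exact iInf₂_le N hs
  · exact le_iInf₂ fun N' h' => le_of_eq (valN_eq S μ hinv hs h')

lemma cylFun_empty (S : CMS E V K) (μ : Measure K)
    (hinv : ∀ g : K → ℝ≥0∞, Measurable g →
      ∫⁻ x, g x ∂μ = ∑ e : E, ∫⁻ x, ENNReal.ofReal (S.p e x) * g (S.w e x) ∂μ) :
    cylFun S μ (∅ : Set (ℤ → E)) = 0 := by
  rw [cylFun_eq_valN S μ hinv (N := 0) (fun σ τ _ h => h.elim), valN]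
  simp [thN_empty]

end Aux5
section Aux6
variable {E V K : Type*} [Fintype E] [MetricSpace K] [MeasurableSpace K]

lemma mem_cyl {E : Type*} (m : ℤ) (j : ℕ) (e σ : ℤ → E) :
    σ ∈ cyl m j e ↔ ∀ k : ℤ, m ≤ k → k ≤ m + j → σ k = e k := Iff.rfl

lemma mem_cyl_self {E : Type*} (m : ℤ) (j : ℕ) (e : ℤ → E) : e ∈ cyl m j e :=
  fun _ _ _ => rfl

lemma cyl_detN {E : Type*} (N : ℕ) (m : ℤ) (j : ℕ) (e : ℤ → E)
    (h1 : -(N:ℤ) ≤ m) (h2 : m + (j:ℤ) ≤ N) : DetN N (cyl m j e) :=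
  fun σ τ hag hm k hk1 hk2 => by
    rw [← hag k (by omega) (by omega)]
    exact hm k hk1 hk2

lemma resN_image_cyl {E : Type*} (N : ℕ) (m : ℤ) (j : ℕ) (e : ℤ → E)
    (h1 : -(N:ℤ) ≤ m) (h2 : m + (j:ℤ) ≤ N) :
    resN N '' cyl m j e = {g | embN N g ∈ cyl m j e} := by
  ext g
  constructor
  · rintro ⟨σ, hσ, rfl⟩
    intro k hk1 hk2
    rw [embN_resN N σ k (by omega) (by omega)]
    exact hσ k hk1 hk2
  · intro h
    exact ⟨embN N g, h, resN_embN N g⟩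

lemma mem_cyl_left_iff {E : Type*} (N : ℕ) (m : ℤ) (j : ℕ) (e : ℤ → E) (f : E) (σ : ℤ → E) :
    σ ∈ cyl (m-1) (j+1) (Function.update e (m-1) f) ↔ (σ ∈ cyl m j e ∧ σ (m-1) = f) := by
  constructor
  · intro h
    refine ⟨fun k hk1 hk2 => ?_, ?_⟩
    · rw [h k (by omega) (by push_cast; push_cast at hk2; omega), Function.update_of_ne (by omega)]
    · rw [h (m-1) le_rfl (by push_cast; omega), Function.update_self]
  · rintro ⟨h, hf⟩
    intro k hk1 hk2
    by_cases hk : k = m - 1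
    · rw [hk, Function.update_self, ← hf]
    · rw [Function.update_of_ne hk, h k (by omega) (by push_cast at hk2 ⊢; omega)]

lemma mem_cyl_right_iff {E : Type*} (N : ℕ) (m : ℤ) (j : ℕ) (e : ℤ → E) (f : E) (σ : ℤ → E) :
    σ ∈ cyl m (j+1) (Function.update e (m + j + 1) f) ↔ (σ ∈ cyl m j e ∧ σ (m + j + 1) = f) := by
  constructor
  · intro h
    refine ⟨fun k hk1 hk2 => ?_, ?_⟩
    · rw [h k hk1 (by push_cast; omega), Function.update_of_ne (by omega)]
    · rw [h (m+j+1) (by omega) (by push_cast; omega), Function.update_self]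
  · rintro ⟨h, hf⟩
    intro k hk1 hk2
    by_cases hk : k = m + j + 1
    · rw [hk, Function.update_self, ← hf]
    · rw [Function.update_of_ne hk, h k hk1 (by push_cast at hk2 ⊢; omega)]

lemma ind_mem {α : Type*} (P : α → Prop) (f : α → ℝ≥0∞) (a : α) (h : P a) :
    ({x | P x}).indicator f a = f a := Set.indicator_of_mem h f

lemma ind_not_mem {α : Type*} (P : α → Prop) (f : α → ℝ≥0∞) (a : α) (h : ¬ P a) :
    ({x | P x}).indicator f a = 0 := Set.indicator_of_notMem h f

lemma sum_wN_cyl (S : CMS E V K) (μ : Measure K)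
    (hinv : ∀ g : K → ℝ≥0∞, Measurable g →
      ∫⁻ x, g x ∂μ = ∑ e : E, ∫⁻ x, ENNReal.ofReal (S.p e x) * g (S.w e x) ∂μ)
    (N : ℕ) :
    ∀ (d : ℕ) (m : ℤ) (j : ℕ) (e : ℤ → E), -(N:ℤ) ≤ m → m + (j:ℤ) ≤ N → 2*N - j ≤ d →
    ∑ g : Fin (2*N+1) → E, ({g | embN N g ∈ cyl m j e}).indicator (wN S μ N) g
      = Ifun S μ m j e := by
  classical
  have base : ∀ (e : ℤ → E),
      ∑ g : Fin (2*N+1) → E, ({g | embN N g ∈ cyl (-(N:ℤ)) (2*N) e}).indicator (wN S μ N) g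
      = Ifun S μ (-(N:ℤ)) (2*N) e := by
    intro e
    have hset : {g : Fin (2*N+1) → E | embN N g ∈ cyl (-(N:ℤ)) (2*N) e} = {g : Fin (2*N+1) → E | g = resN N e} := by
      ext g
      simp only [Set.mem_setOf_eq]
      constructor
      · intro h
        funext i
        have hi := i.isLt
        have hh := h (-(N:ℤ) + i) (by omega) (by push_cast; omega)
        calc g i = resN N (embN N g) i := by rw [resN_embN]
        _ = embN N g (-(N:ℤ) + i) := rfl
        _ = e (-(N:ℤ) + i) := hh
        _ = resN N e i := rfl
      · rintro rfl
        intro k hk1 hk2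
        exact embN_resN N e k (by omega) (by push_cast at hk2; omega)
    rw [hset]
    rw [Finset.sum_eq_single (resN N e)]
    · rw [ind_mem (fun g : Fin (2*N+1) → E => g = resN N e) (wN S μ N) (resN N e) rfl, wN]
      exact Ifun_congr S μ _ _ (fun k hk1 hk2 => embN_resN N e k (by omega) (by push_cast at hk2; omega))
    · intro g _ hg
      exact ind_not_mem _ _ _ hg
    · intro h
      exact absurd (Finset.mem_univ _) h
  intro d
  induction d with
  | zero =>
    intro m j e h1 h2 h3
    have hm : m = -(N:ℤ) := by omega
    have hj : j = 2*N := by omega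
    subst hm; subst hj
    exact base e
  | succ d ih =>
    intro m j e h1 h2 h3
    by_cases hmj : m = -(N:ℤ) ∧ j = 2*N
    · obtain ⟨hm, hj⟩ := hmj
      subst hm; subst hj
      exact base e
    · by_cases hm : -(N:ℤ) < m
      · -- left step
        have hj2N : (j:ℤ) < 2*N := by omega
        rw [Ifun_left S μ hinv m j e]
        have hterm : ∀ f : E, Ifun S μ (m-1) (j+1) (Function.update e (m-1) f)
            = ∑ g : Fin (2*N+1) → E,
              ({g | embN N g ∈ cyl (m-1) (j+1) (Function.update e (m-1) f)}).indicator (wN S μ N) g :=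
          fun f => (ih (m-1) (j+1) _ (by omega) (by push_cast; omega) (by omega)).symm
        simp only [hterm]
        rw [Finset.sum_comm]
        apply Finset.sum_congr rfl
        intro g _
        by_cases hc : embN N g ∈ cyl m j e
        · rw [ind_mem (fun g : Fin (2*N+1) → E => embN N g ∈ cyl m j e) (wN S μ N) g hc]
          rw [Finset.sum_eq_single (embN N g (m-1))]
          · exact (ind_mem (fun g' : Fin (2*N+1) → E =>
              embN N g' ∈ cyl (m-1) (j+1) (Function.update e (m-1) (embN N g (m-1))))
              (wN S μ N) g ((mem_cyl_left_iff N m j e _ _).2 ⟨hc, rfl⟩)).symm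
          · intro f _ hf
            apply ind_not_mem
            intro hmem
            exact absurd ((mem_cyl_left_iff N m j e f _).1 hmem).2.symm hf
          · intro h; exact absurd (Finset.mem_univ _) h
        · rw [ind_not_mem (fun g : Fin (2*N+1) → E => embN N g ∈ cyl m j e) (wN S μ N) g hc]
          symm
          apply Finset.sum_eq_zero
          intro f _
          apply ind_not_mem
          intro hmem
          exact hc ((mem_cyl_left_iff N m j e f _).1 hmem).1
      · -- right step
        have hm' : m = -(N:ℤ) := by omega
        have hj2N : (j:ℤ) < 2*N := by
          rcases lt_or_eq_of_le (show (j:ℤ) ≤ 2*N by omega) with h | h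
          · exact h
          · exact absurd ⟨hm', by exact_mod_cast h⟩ hmj
        rw [Ifun_right S μ m j e]
        have hterm : ∀ f : E, Ifun S μ m (j+1) (Function.update e (m+j+1) f)
            = ∑ g : Fin (2*N+1) → E,
              ({g | embN N g ∈ cyl m (j+1) (Function.update e (m+j+1) f)}).indicator (wN S μ N) g :=
          fun f => (ih m (j+1) _ (by omega) (by push_cast; omega) (by omega)).symm
        simp only [hterm]
        rw [Finset.sum_comm]
        apply Finset.sum_congr rfl
        intro g _
        by_cases hc : embN N g ∈ cyl m j e
        · rw [ind_mem (fun g : Fin (2*N+1) → E => embN N g ∈ cyl m j e) (wN S μ N) g hc]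
          rw [Finset.sum_eq_single (embN N g (m+j+1))]
          · exact (ind_mem (fun g' : Fin (2*N+1) → E =>
              embN N g' ∈ cyl m (j+1) (Function.update e (m+j+1) (embN N g (m+j+1))))
              (wN S μ N) g ((mem_cyl_right_iff N m j e _ _).2 ⟨hc, rfl⟩)).symm
          · intro f _ hf
            apply ind_not_mem
            intro hmem
            exact absurd ((mem_cyl_right_iff N m j e f _).1 hmem).2.symm hf
          · intro h; exact absurd (Finset.mem_univ _) h
        · rw [ind_not_mem (fun g : Fin (2*N+1) → E => embN N g ∈ cyl m j e) (wN S μ N) g hc]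
          symm
          apply Finset.sum_eq_zero
          intro f _
          apply ind_not_mem
          intro hmem
          exact hc ((mem_cyl_right_iff N m j e f _).1 hmem).1

lemma valN_cyl (S : CMS E V K) (μ : Measure K)
    (hinv : ∀ g : K → ℝ≥0∞, Measurable g →
      ∫⁻ x, g x ∂μ = ∑ e : E, ∫⁻ x, ENNReal.ofReal (S.p e x) * g (S.w e x) ∂μ)
    (N : ℕ) (m : ℤ) (j : ℕ) (e : ℤ → E) (h1 : -(N:ℤ) ≤ m) (h2 : m + (j:ℤ) ≤ N) :
    valN S μ N (cyl m j e) = Ifun S μ m j e := by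
  rw [valN, resN_image_cyl N m j e h1 h2, thN]
  exact sum_wN_cyl S μ hinv N (2*N - j) m j e h1 h2 le_rfl

lemma cylFun_cyl (S : CMS E V K) (μ : Measure K)
    (hinv : ∀ g : K → ℝ≥0∞, Measurable g →
      ∫⁻ x, g x ∂μ = ∑ e : E, ∫⁻ x, ENNReal.ofReal (S.p e x) * g (S.w e x) ∂μ)
    (m : ℤ) (j : ℕ) (e : ℤ → E) :
    cylFun S μ (cyl m j e) = Ifun S μ m j e := by
  set N : ℕ := (-m).toNat + (m + j).toNat + j with hN
  have h1 : -(N:ℤ) ≤ m := by simp only [hN]; push_cast; omega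
  have h2 : m + (j:ℤ) ≤ N := by simp only [hN]; push_cast; omega
  rw [cylFun_eq_valN S μ hinv (cyl_detN N m j e h1 h2), valN_cyl S μ hinv N m j e h1 h2]

end Aux6
section Aux7
variable {E V K : Type*} [Fintype E] [MetricSpace K] [MeasurableSpace K]

lemma DetN.compl {E : Type*} {N : ℕ} {s : Set (ℤ → E)} (hs : DetN N s) : DetN N sᶜ :=
  fun σ τ hag hm hc => hm (hs τ σ (fun k h1 h2 => (hag k h1 h2).symm) hc)

lemma DetN.isOpen {E : Type*} [TopologicalSpace E] [DiscreteTopology E]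
    {N : ℕ} {s : Set (ℤ → E)} (hs : DetN N s) : IsOpen s := by
  have hset : s = ⋃ σ ∈ s, ⋂ k ∈ Finset.Icc (-(N:ℤ)) (N:ℤ), (fun τ : ℤ → E => τ k) ⁻¹' {σ k} := by
    ext τ
    simp only [Set.mem_iUnion, Set.mem_iInter, Set.mem_preimage, Set.mem_singleton_iff,
      Finset.mem_Icc]
    constructor
    · intro h
      exact ⟨τ, h, fun k _ => rfl⟩
    · rintro ⟨σ, hσ, hag⟩
      exact hs σ τ (fun k h1 h2 => (hag k ⟨h1, h2⟩).symm) hσ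
  rw [hset]
  exact isOpen_biUnion fun σ _ => isOpen_biInter_finset fun k _ =>
    (continuous_apply k).isOpen_preimage _ (isOpen_discrete _)

lemma DetN.isClosed {E : Type*} [TopologicalSpace E] [DiscreteTopology E]
    {N : ℕ} {s : Set (ℤ → E)} (hs : DetN N s) : IsClosed s := by
  rw [← isOpen_compl_iff]
  exact hs.compl.isOpen

/-- compactness: countable subadditivity of `cylFun` on determined sets -/
lemma cylFun_subadd (S : CMS E V K) (μ : Measure K)
    (hinv : ∀ g : K → ℝ≥0∞, Measurable g →
      ∫⁻ x, g x ∂μ = ∑ e : E, ∫⁻ x, ENNReal.ofReal (S.p e x) * g (S.w e x) ∂μ)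
    {s : Set (ℤ → E)} {N₀ : ℕ} (hs : DetN N₀ s) (A : ℕ → Set (ℤ → E))
    (hA : ∀ n, ∃ N, DetN N (A n)) (hcov : s ⊆ ⋃ n, A n) :
    cylFun S μ s ≤ ∑' n, cylFun S μ (A n) := by
  classical
  letI : TopologicalSpace E := ⊥
  haveI : DiscreteTopology E := ⟨rfl⟩
  haveI : CompactSpace E := Finite.compactSpace
  obtain ⟨t, ht⟩ := IsCompact.elim_finite_subcover (hs.isClosed.isCompact) A
    (fun n => ((hA n).choose_spec).isOpen) hcov
  set N : ℕ := N₀ ⊔ t.sup (fun n => (hA n).choose) with hNdef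
  have hsN : DetN N s := hs.mono le_sup_left
  have hAN : ∀ n ∈ t, DetN N (A n) := fun n hn =>
    ((hA n).choose_spec).mono (le_trans (Finset.le_sup (f := fun n => (hA n).choose) hn) le_sup_right)
  calc cylFun S μ s = valN S μ N s := cylFun_eq_valN S μ hinv hsN
  _ ≤ ∑ n ∈ t, valN S μ N (A n) := by
      rw [valN]
      calc thN S μ N (resN N '' s) ≤ thN S μ N (⋃ n ∈ t, resN N '' (A n)) := by
            apply thN_mono
            intro g hg
            obtain ⟨σ, hσ, rfl⟩ := hg
            obtain ⟨u, hu⟩ := Set.mem_iUnion.1 (ht hσ)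
            simp only [Set.mem_iUnion] at hu ⊢
            obtain ⟨hut, hmem⟩ := hu
            exact ⟨u, hut, Set.mem_image_of_mem _ hmem⟩
      _ ≤ ∑ n ∈ t, thN S μ N (resN N '' (A n)) := thN_biUnion_le S μ N t _
  _ = ∑ n ∈ t, cylFun S μ (A n) := by
      apply Finset.sum_congr rfl
      intro n hn
      exact (cylFun_eq_valN S μ hinv (hAN n hn)).symm
  _ ≤ ∑' n, cylFun S μ (A n) := ENNReal.sum_le_tsum t

/-- additivity of `cylFun` for the Carathéodory criterion -/
lemma cylFun_add (S : CMS E V K) (μ : Measure K)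
    (hinv : ∀ g : K → ℝ≥0∞, Measurable g →
      ∫⁻ x, g x ∂μ = ∑ e : E, ∫⁻ x, ENNReal.ofReal (S.p e x) * g (S.w e x) ∂μ)
    {s t : Set (ℤ → E)} {N N' : ℕ} (hs : DetN N s) (ht : DetN N' t) :
    cylFun S μ (t ∩ s) + cylFun S μ (t \ s) = cylFun S μ t := by
  set M : ℕ := N ⊔ N' with hM
  have hsM : DetN M s := hs.mono le_sup_left
  have htM : DetN M t := ht.mono le_sup_right
  have h1 : DetN M (t ∩ s) := htM.inter hsM
  have h2 : DetN M (t \ s) := htM.diff hsM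
  rw [cylFun_eq_valN S μ hinv h1, cylFun_eq_valN S μ hinv h2, cylFun_eq_valN S μ hinv htM,
    valN, valN, valN]
  have him : resN M '' (t ∩ s) ∪ resN M '' (t \ s) = resN M '' t := by
    rw [← Set.image_union, Set.inter_union_diff]
  have hdisj : Disjoint (resN M '' (t ∩ s)) (resN M '' (t \ s)) := by
    rw [Set.disjoint_left]
    rintro g ⟨σ₁, hσ₁, rfl⟩ ⟨σ₂, hσ₂, hr⟩
    have hag : ∀ k : ℤ, -(M:ℤ) ≤ k → k ≤ M → σ₂ k = σ₁ k := by
      intro k hk1 hk2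
      have : resN M σ₂ ⟨(k + M).toNat, by omega⟩ = resN M σ₁ ⟨(k + M).toNat, by omega⟩ := by
        rw [hr]
      rw [resN, resN] at this
      calc σ₂ k = σ₂ (-(M:ℤ) + ((k + (M:ℤ)).toNat : ℕ)) := congrArg σ₂ (by omega)
      _ = σ₁ (-(M:ℤ) + ((k + (M:ℤ)).toNat : ℕ)) := this
      _ = σ₁ k := congrArg σ₁ (by omega)
    exact hσ₂.2 (h1 σ₁ σ₂ (fun k a b => (hag k a b).symm) hσ₁).2
  rw [← thN_union_disjoint S μ M hdisj, him]

end Aux7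
section Aux8
variable {E : Type*} [Fintype E]

def cylC (E : Type*) : Set (Set (ℤ → E)) :=
  insert ∅ {s | ∃ (n : ℕ) (e : ℤ → E), s = cyl (-(n:ℤ)) (2*n) e}

lemma cyl_eq_iInter (m : ℤ) (j : ℕ) (e : ℤ → E) :
    cyl m j e = ⋂ k ∈ Finset.Icc m (m + (j:ℤ)), (fun σ : ℤ → E => σ k) ⁻¹' {e k} := by
  ext σ
  simp only [Set.mem_iInter, Set.mem_preimage, Set.mem_singleton_iff, Finset.mem_Icc]
  exact ⟨fun h k hk => h k hk.1 hk.2, fun h k h1 h2 => h k ⟨h1, h2⟩⟩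

lemma measurableSet_cyl (m : ℤ) (j : ℕ) (e : ℤ → E) : MeasurableSet[sigAll E] (cyl m j e) := by
  letI : MeasurableSpace (ℤ → E) := sigAll E
  rw [cyl_eq_iInter]
  apply MeasurableSet.biInter (Finset.Icc m (m + (j:ℤ))).countable_toSet
  intro k _
  exact (@measurable_pi_apply ℤ (fun _ => E) (fun _ => ⊤) k) trivial

lemma inter_cylC_le {n n' : ℕ} (hnn : n ≤ n') (e e' : ℤ → E) :
    cyl (-(n:ℤ)) (2*n) e ∩ cyl (-(n':ℤ)) (2*n') e' ∈ cylC E := by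
  classical
  by_cases hcomp : ∀ k : ℤ, -(n:ℤ) ≤ k → k ≤ n → e' k = e k
  · right
    refine ⟨n', e', ?_⟩
    apply Set.eq_of_subset_of_subset (Set.inter_subset_right)
    intro σ hσ
    constructor
    · intro k h1 h2
      have hk2 : k ≤ (n:ℤ) := by push_cast at h2; omega
      rw [hσ k (by omega) (by push_cast; omega), hcomp k h1 hk2]
    · exact hσ
  · left
    push_neg at hcomp
    obtain ⟨k, h1, h2, hne⟩ := hcomp
    apply Set.eq_empty_iff_forall_notMem.2
    rintro σ ⟨ha, hb⟩
    apply hne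
    rw [← ha k h1 (by push_cast; omega), ← hb k (by omega) (by push_cast; omega)]

lemma isPiSystem_cylC : IsPiSystem (cylC E) := by
  rintro s hs t ht _
  rcases hs with rfl | ⟨n, e, rfl⟩
  · rw [Set.empty_inter]; exact Set.mem_insert _ _
  rcases ht with rfl | ⟨n', e', rfl⟩
  · rw [Set.inter_empty]; exact Set.mem_insert _ _
  rcases le_total n n' with h | h
  · exact inter_cylC_le h e e'
  · rw [Set.inter_comm]; exact inter_cylC_le h e' e

lemma measurableSet_coord_gen (i : ℤ) (c : E) :
    MeasurableSet[MeasurableSpace.generateFrom (cylC E)] {σ : ℤ → E | σ i = c} := by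
  classical
  letI : MeasurableSpace (ℤ → E) := MeasurableSpace.generateFrom (cylC E)
  set N : ℕ := i.natAbs with hN
  have hi1 : -(N:ℤ) ≤ i := by omega
  have hi2 : i ≤ (N:ℤ) := by omega
  have hset : {σ : ℤ → E | σ i = c}
      = ⋃ g : Fin (2*N+1) → E,
          (if embN N g i = c then cyl (-(N:ℤ)) (2*N) (embN N g) else ∅) := by
    ext σ
    simp only [Set.mem_setOf_eq, Set.mem_iUnion]
    constructor
    · intro h
      refine ⟨resN N σ, ?_⟩
      rw [if_pos (by rw [embN_resN N σ i hi1 hi2]; exact h)]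
      intro k h1 h2
      exact (embN_resN N σ k (by omega) (by push_cast at h2; omega)).symm
    · rintro ⟨g, hg⟩
      by_cases hc : embN N g i = c
      · rw [if_pos hc] at hg
        rw [hg i hi1 (by push_cast; omega), hc]
      · rw [if_neg hc] at hg
        exact absurd hg (Set.notMem_empty σ)
  rw [hset]
  apply MeasurableSet.iUnion
  intro g
  by_cases hc : embN N g i = c
  · rw [if_pos hc]
    exact MeasurableSpace.measurableSet_generateFrom (Set.mem_insert_of_mem _ ⟨N, embN N g, rfl⟩)
  · rw [if_neg hc]
    exact MeasurableSet.empty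

lemma sigAll_eq_generateFrom : sigAll E = MeasurableSpace.generateFrom (cylC E) := by
  apply le_antisymm
  · rw [sigAll]
    apply iSup_le
    intro i
    intro s hs
    obtain ⟨u, _, rfl⟩ := hs
    have hset : (fun σ : ℤ → E => σ i) ⁻¹' u = ⋃ c ∈ u, {σ : ℤ → E | σ i = c} := by
      ext σ
      simp [Set.mem_preimage]
    rw [hset]
    letI : MeasurableSpace (ℤ → E) := MeasurableSpace.generateFrom (cylC E)
    exact MeasurableSet.biUnion u.to_countable (fun c _ => measurableSet_coord_gen i c)
  · apply MeasurableSpace.generateFrom_le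
    rintro s (rfl | ⟨n, e, rfl⟩)
    · exact @MeasurableSet.empty _ (sigAll E)
    · exact measurableSet_cyl _ _ _

lemma univ_eq_union_cyl : (Set.univ : Set (ℤ → E)) = ⋃ c : E, cyl 0 0 (fun _ => c) := by
  ext σ
  simp only [Set.mem_univ, true_iff, Set.mem_iUnion]
  refine ⟨σ 0, ?_⟩
  intro k h1 h2
  have : k = 0 := by push_cast at h2; omega
  rw [this]

lemma disjoint_cyl0 : Pairwise (Function.onFun Disjoint (fun c : E => cyl 0 0 (fun _ => c))) := by
  intro c c' hne
  rw [Function.onFun, Set.disjoint_left]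
  intro σ h1 h2
  exact hne ((h1 0 le_rfl (by norm_num)).symm.trans (h2 0 le_rfl (by norm_num)))

end Aux8
section Aux9
variable {E V K : Type*} [Fintype E] [MetricSpace K] [MeasurableSpace K]

open Classical in
noncomputable def mfun (S : CMS E V K) (μ : Measure K) : Set (ℤ → E) → ℝ≥0∞ :=
  fun s => if ∃ N, DetN N s then cylFun S μ s else ∞

lemma mfun_pos (S : CMS E V K) (μ : Measure K) {s : Set (ℤ → E)} (h : ∃ N, DetN N s) :
    mfun S μ s = cylFun S μ s := by rw [mfun, if_pos h]

lemma mfun_neg (S : CMS E V K) (μ : Measure K) {s : Set (ℤ → E)} (h : ¬ ∃ N, DetN N s) :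
    mfun S μ s = ∞ := by rw [mfun, if_neg h]

lemma detN_empty : ∃ N, DetN N (∅ : Set (ℤ → E)) := ⟨0, fun _ _ _ h => h.elim⟩

lemma mfun_empty (S : CMS E V K) (μ : Measure K)
    (hinv : ∀ g : K → ℝ≥0∞, Measurable g →
      ∫⁻ x, g x ∂μ = ∑ e : E, ∫⁻ x, ENNReal.ofReal (S.p e x) * g (S.w e x) ∂μ) :
    mfun S μ ∅ = 0 := by
  rw [mfun_pos S μ detN_empty]
  exact cylFun_empty S μ hinv

end Aux9
/-- if `U*μ = μ`, the set function
`M̄(_m[e_m,…,e_n]) = ∫ p_{e_m}(x)⋯p_{e_n}(w_{e_{n-1}}∘⋯∘w_{e_m}x) dμ(x)` on cylinders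
extends uniquely to a shift-invariant Borel probability measure on `Σ`; in particular the
compatibility identity `M̄(_m[e_m,…,e_n]) = ∑_{e_{m-1}} M̄(_{m-1}[e_{m-1},e_m,…,e_n])` holds. -/
theorem statement12 {E V K : Type*} [Fintype E] [MetricSpace K] [CompleteSpace K]
    [MeasurableSpace K] [BorelSpace K] (S : CMS E V K)
    (μ : Measure K) [IsProbabilityMeasure μ]
    (hinv : ∀ g : K → ℝ≥0∞, Measurable g →
      ∫⁻ x, g x ∂μ = ∑ e : E, ∫⁻ x, ENNReal.ofReal (S.p e x) * g (S.w e x) ∂μ) :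
    ∃ M : @Measure (ℤ → E) (sigAll E),
      @IsProbabilityMeasure _ (sigAll E) M ∧
      (∀ (m : ℤ) (j : ℕ) (e : ℤ → E),
        M (cyl m j e) = ∫⁻ x, ENNReal.ofReal (S.pathProb e m x j) ∂μ) ∧
      @Measure.map (ℤ → E) (ℤ → E) (sigAll E) (sigAll E) shiftMap M = M ∧
      (∀ M' : @Measure (ℤ → E) (sigAll E), @IsProbabilityMeasure _ (sigAll E) M' →
        (∀ (m : ℤ) (j : ℕ) (e : ℤ → E),
          M' (cyl m j e) = ∫⁻ x, ENNReal.ofReal (S.pathProb e m x j) ∂μ) → M' = M) ∧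
      (∀ (m : ℤ) (j : ℕ) (e : ℤ → E),
        (∫⁻ x, ENNReal.ofReal (S.pathProb e m x j) ∂μ) =
          ∑ f : E, ∫⁻ x, ENNReal.ofReal
            (S.pathProb (Function.update e (m - 1) f) (m - 1) x (j + 1)) ∂μ) := by
  classical
  letI : MeasurableSpace E := ⊤
  letI : MeasurableSpace (ℤ → E) := sigAll E
  set oμ : OuterMeasure (ℤ → E) := OuterMeasure.ofFunction (mfun S μ) (mfun_empty S μ hinv)
    with hoμ
  have h_eq : ∀ s : Set (ℤ → E), (∃ N, DetN N s) → oμ s = cylFun S μ s := by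
    intro s hs
    apply le_antisymm
    · calc oμ s ≤ mfun S μ s := OuterMeasure.ofFunction_le s
      _ = cylFun S μ s := mfun_pos S μ hs
    · rw [hoμ, OuterMeasure.ofFunction_apply]
      refine le_iInf fun A => le_iInf fun hcov => ?_
      by_cases hall : ∀ n, ∃ N, DetN N (A n)
      · calc cylFun S μ s ≤ ∑' n, cylFun S μ (A n) :=
              cylFun_subadd S μ hinv hs.choose_spec A hall hcov
        _ = ∑' n, mfun S μ (A n) := tsum_congr fun n => (mfun_pos S μ (hall n)).symm
      · push_neg at hall
        obtain ⟨n0, hn0⟩ := hall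
        calc cylFun S μ s ≤ ∞ := le_top
        _ = mfun S μ (A n0) := (mfun_neg S μ (not_exists.2 hn0)).symm
        _ ≤ ∑' n, mfun S μ (A n) := ENNReal.le_tsum n0
  have hcar : ∀ s : Set (ℤ → E), (∃ N, DetN N s) → MeasurableSet[oμ.caratheodory] s := by
    intro s hs
    apply OuterMeasure.ofFunction_caratheodory
    intro t
    by_cases hPt : ∃ N, DetN N t
    · have h1 : ∃ N, DetN N (t ∩ s) :=
        ⟨hPt.choose ⊔ hs.choose,
          (hPt.choose_spec.mono le_sup_left).inter (hs.choose_spec.mono le_sup_right)⟩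
      have h2 : ∃ N, DetN N (t \ s) :=
        ⟨hPt.choose ⊔ hs.choose,
          (hPt.choose_spec.mono le_sup_left).diff (hs.choose_spec.mono le_sup_right)⟩
      rw [mfun_pos S μ h1, mfun_pos S μ h2, mfun_pos S μ hPt]
      exact le_of_eq (cylFun_add S μ hinv hs.choose_spec hPt.choose_spec)
    · rw [mfun_neg S μ hPt]
      exact le_top
  have hle : sigAll E ≤ oμ.caratheodory := by
    rw [sigAll]
    apply iSup_le
    intro i s hs
    obtain ⟨u, _, rfl⟩ := hs
    apply hcar
    refine ⟨i.natAbs, fun σ τ hag hm => ?_⟩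
    have h := hag i (by omega) (by omega)
    simp only [Set.mem_preimage] at hm ⊢
    rwa [← h]
  set M : Measure (ℤ → E) := oμ.toMeasure hle with hMdef
  have hM_apply : ∀ s : Set (ℤ → E), MeasurableSet[sigAll E] s → M s = oμ s :=
    fun s h => toMeasure_apply oμ hle h
  have hM_cyl : ∀ (m : ℤ) (j : ℕ) (e : ℤ → E), M (cyl m j e) = Ifun S μ m j e := by
    intro m j e
    rw [hM_apply _ (measurableSet_cyl m j e)]
    have hdet : ∃ N, DetN N (cyl m j e) :=
      ⟨(-m).toNat + (m + j).toNat + j, cyl_detN _ m j e (by push_cast; omega) (by push_cast; omega)⟩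
    rw [h_eq _ hdet, cylFun_cyl S μ hinv]
  have hMuniv : M Set.univ = 1 := by
    rw [univ_eq_union_cyl,
      measure_iUnion disjoint_cyl0 (fun c => measurableSet_cyl 0 0 _), tsum_fintype]
    have hval : ∀ c : E, M (cyl 0 0 (fun _ => c)) = ∫⁻ x, ENNReal.ofReal (S.p c x) ∂μ := by
      intro c
      rw [hM_cyl]
      rfl
    simp only [hval]
    rw [← lintegral_finset_sum _ (fun c _ => (S.p_meas c).ennreal_ofReal)]
    have hone : (fun x => ∑ c : E, ENNReal.ofReal (S.p c x)) = fun _ => (1 : ℝ≥0∞) := by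
      funext x
      rw [← ENNReal.ofReal_sum_of_nonneg (fun c _ => S.p_nonneg c x), S.p_sum x,
        ENNReal.ofReal_one]
    rw [hone, lintegral_one, measure_univ]
  haveI hMprob : IsProbabilityMeasure M := ⟨hMuniv⟩
  have huniq : ∀ M' : Measure (ℤ → E), IsProbabilityMeasure M' →
      (∀ (m : ℤ) (j : ℕ) (e : ℤ → E), M' (cyl m j e) = Ifun S μ m j e) → M' = M := by
    intro M' hp hval
    refine ext_of_generate_finite (cylC E) sigAll_eq_generateFrom isPiSystem_cylC ?_ ?_
    · rintro s (rfl | ⟨n, e, rfl⟩)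
      · simp
      · rw [hval, hM_cyl]
    · rw [hp.measure_univ, hMuniv]
  have hshift_meas : Measurable (shiftMap : (ℤ → E) → (ℤ → E)) := by
    exact measurable_pi_lambda shiftMap (fun n => measurable_pi_apply (n + 1))
  have hmap : Measure.map shiftMap M = M := by
    apply huniq _ (Measure.isProbabilityMeasure_map hshift_meas.aemeasurable)
    intro m j e
    rw [Measure.map_apply hshift_meas (measurableSet_cyl m j e)]
    have hpre : shiftMap ⁻¹' (cyl m j e) = cyl (m + 1) j (fun k => e (k - 1)) := by
      ext σ
      simp only [Set.mem_preimage]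
      constructor
      · intro h k h1 h2
        have hh := h (k - 1) (by omega) (by push_cast at h2 ⊢; omega)
        have hs : shiftMap σ (k - 1) = σ k := by
          rw [shiftMap]
          exact congrArg σ (by ring)
        rw [← hs]
        exact hh
      · intro h k h1 h2
        show σ (k + 1) = e k
        have hh := h (k + 1) (by omega) (by push_cast at h2 ⊢; omega)
        rw [hh]
        exact congrArg e (by ring)
    rw [hpre, hM_cyl]
    exact Ifun_shift S μ m j e
  exact ⟨M, hMprob, fun m j e => hM_cyl m j e, hmap,
    fun M' h1 h2 => huniq M' h1 (fun m j e => h2 m j e),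
    fun m j e => Ifun_left S μ hinv m j e⟩
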